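/- Let X be a real Hilbert space, A : X → X strongly monotone with constant m_A > 0, φ : X → ℝ convex and lower semicontinuous, f ∈ X, and ũ ∈ X. Suppose {u_n} ⊆ X satisfies u_n ⇀ ũ weakly in X and, for each n, ⟪A u_n, ũ - u_n⟫ + φ(ũ) - φ(u_n) ≥ ⟪f, ũ - u_n⟫. Then u_n → ũ strongly in X. -/

import Mathlib

open Filter Topology Finset
open scoped RealInnerProductSpace

lemma stmt4_aux {X : Type*} [NormedAddCommGroup X] [InnerProductSpace ℝ X]
    (mA : ℝ) (hmA : 0 < mA) (φ : X → ℝ) (hφ : ConvexOn ℝ Set.univ φ)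
    (hφlsc : LowerSemicontinuous φ) (w0 : X) (M : ℝ)
    (v : ℕ → X) (c : ℕ → ℝ)
    (hb : ∀ n, ‖v n‖ ≤ M)
    (hv : ∀ w : X, Tendsto (fun n => ⟪v n, w⟫) atTop (𝓝 0))
    (hkey : ∀ n, mA * ‖v n‖ ^ 2 + φ (w0 + v n) ≤ φ w0 + c n)
    (hc : Tendsto c atTop (𝓝 0)) :
    ∃ g : ℕ → ℕ, StrictMono g ∧ Tendsto (fun k => ‖v (g k)‖) atTop (𝓝 0) := by
  have hM0 : 0 ≤ M := le_trans (norm_nonneg _) (hb 0)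
  -- Step 1: Banach–Saks type selection
  have hex : ∀ N j : ℕ, ∃ n, N < n ∧ ∀ m ≤ N, |⟪v m, v n⟫| ≤ (1/2:ℝ)^j := by
    intro N j
    have h1 : ∀ᶠ n in atTop, ∀ m ∈ Finset.Iic N, |⟪v m, v n⟫| ≤ (1/2:ℝ)^j := by
      rw [Filter.eventually_all_finset]
      intro m _
      have h2 : Tendsto (fun n => ⟪v m, v n⟫) atTop (𝓝 0) := by
        have := hv (v m)
        simpa [real_inner_comm] using this
      have h3 := h2.abs
      rw [abs_zero] at h3
      exact h3.eventually_le_const (by positivity)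
    have h4 : ∀ᶠ n in atTop, N < n := eventually_gt_atTop N
    obtain ⟨n, hn1, hn2⟩ := (h4.and h1).exists
    exact ⟨n, hn1, fun m hm => hn2 m (Finset.mem_Iic.2 hm)⟩
  choose G hG1 hG2 using hex
  let g : ℕ → ℕ := fun j => Nat.rec 0 (fun j gj => G gj (j+1)) j
  have hsucc : ∀ j, g (j+1) = G (g j) (j+1) := fun j => rfl
  have hgmono : StrictMono g := by
    apply strictMono_nat_of_lt_succ
    intro j
    rw [hsucc]
    exact hG1 (g j) (j+1)
  have hsmall : ∀ i j : ℕ, i < j → |⟪v (g i), v (g j)⟫| ≤ (1/2:ℝ)^j := by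
    intro i j hij
    obtain ⟨j', rfl⟩ : ∃ j', j = j'+1 := ⟨j-1, by omega⟩
    have hle : g i ≤ g j' := hgmono.monotone (by omega)
    rw [hsucc]
    exact hG2 (g j') (j'+1) (g i) hle
  -- Step 2: norm bound on partial sums
  set S : ℕ → X := fun k => ∑ i ∈ Finset.range k, v (g i) with hS
  have hSnorm : ∀ k, ‖S k‖^2 ≤ k * (M^2 + 2) := by
    intro k
    induction k with
    | zero => simp [hS]
    | succ k ih =>
      have hsum : S (k+1) = S k + v (g k) := Finset.sum_range_succ _ _
      rw [hsum, norm_add_sq_real]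
      have hip : ⟪S k, v (g k)⟫ = ∑ i ∈ Finset.range k, ⟪v (g i), v (g k)⟫ :=
        sum_inner _ _ _
      have hip2 : ⟪S k, v (g k)⟫ ≤ 1 := by
        rw [hip]
        calc ∑ i ∈ Finset.range k, ⟪v (g i), v (g k)⟫
            ≤ ∑ i ∈ Finset.range k, (1/2:ℝ)^k := by
              apply Finset.sum_le_sum
              intro i hi
              exact le_trans (le_abs_self _) (hsmall i k (Finset.mem_range.1 hi))
          _ = k * (1/2:ℝ)^k := by rw [Finset.sum_const, card_range, nsmul_eq_mul]
          _ ≤ 1 := by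
              have h : (k:ℝ) ≤ 2^k := by exact_mod_cast (Nat.lt_two_pow_self (n := k)).le
              have h2 : (0:ℝ) < 2^k := by positivity
              rw [div_pow, one_pow, mul_one_div, div_le_one h2]
              exact h
      have hnv : ‖v (g k)‖^2 ≤ M^2 := by
        have := hb (g k)
        nlinarith [norm_nonneg (v (g k))]
      push_cast
      nlinarith
  -- Step 3: Cesàro means tend to zero
  set σ : ℕ → X := fun k => (k:ℝ)⁻¹ • S k with hσdef
  have hσ : Tendsto σ atTop (𝓝 0) := by
    rw [tendsto_zero_iff_norm_tendsto_zero]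
    apply squeeze_zero (fun k => norm_nonneg _)
      (g := fun k : ℕ => Real.sqrt ((M^2+2)/(k:ℝ)))
    · intro k
      rcases Nat.eq_zero_or_pos k with hk | hk
      · subst hk
        have : σ 0 = 0 := by simp [hσdef]
        rw [this, norm_zero]
        positivity
      · have hkpos : (0:ℝ) < k := by exact_mod_cast hk
        have h1 : ‖σ k‖^2 ≤ (M^2+2)/(k:ℝ) := by
          have h2 : ‖σ k‖^2 = ((k:ℝ)⁻¹)^2 * ‖S k‖^2 := by
            rw [hσdef]
            rw [norm_smul, mul_pow]
            congr 1
            rw [norm_inv, Real.norm_natCast]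
          rw [h2]
          calc ((k:ℝ)⁻¹)^2 * ‖S k‖^2 ≤ ((k:ℝ)⁻¹)^2 * ((k:ℝ) * (M^2+2)) :=
                mul_le_mul_of_nonneg_left (hSnorm k) (sq_nonneg _)
            _ = (M^2+2)/(k:ℝ) := by field_simp
        calc ‖σ k‖ = Real.sqrt (‖σ k‖^2) := (Real.sqrt_sq (norm_nonneg _)).symm
          _ ≤ Real.sqrt ((M^2+2)/(k:ℝ)) := Real.sqrt_le_sqrt h1
    · have h : Tendsto (fun k : ℕ => (M^2+2)/(k:ℝ)) atTop (𝓝 0) :=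
        tendsto_const_div_atTop_nhds_zero_nat _
      have := (Real.continuous_sqrt.tendsto 0).comp h
      simpa only [Function.comp_def, Real.sqrt_zero] using this
  -- Step 4: averaged key inequality
  have hmean : ∀ k : ℕ, 0 < k → mA * ((k:ℝ)⁻¹ * ∑ i ∈ Finset.range k, ‖v (g i)‖^2)
      ≤ φ w0 - φ (w0 + σ k) + (k:ℝ)⁻¹ * ∑ i ∈ Finset.range k, c (g i) := by
    intro k hk
    have hkpos : (0:ℝ) < k := by exact_mod_cast hk
    have hwsum : ∑ _i ∈ Finset.range k, (k:ℝ)⁻¹ = 1 := by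
      rw [Finset.sum_const, card_range, nsmul_eq_mul]
      field_simp
    have hpt : ∑ i ∈ Finset.range k, (k:ℝ)⁻¹ • (w0 + v (g i)) = w0 + σ k := by
      simp only [smul_add, Finset.sum_add_distrib]
      rw [← Finset.sum_smul, hwsum, one_smul, ← Finset.smul_sum]
    have hjen := hφ.map_sum_le (t := Finset.range k) (w := fun _ => (k:ℝ)⁻¹)
        (p := fun i => w0 + v (g i)) (fun i _ => by positivity) hwsum
        (fun i _ => Set.mem_univ _)
    rw [hpt] at hjen
    simp only [smul_eq_mul] at hjen
    have hsum2 : ∑ i ∈ Finset.range k, (k:ℝ)⁻¹ * (mA * ‖v (g i)‖^2 + φ (w0 + v (g i)))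
        ≤ ∑ i ∈ Finset.range k, (k:ℝ)⁻¹ * (φ w0 + c (g i)) :=
      Finset.sum_le_sum fun i _ => mul_le_mul_of_nonneg_left (hkey (g i)) (by positivity)
    have e1 : ∑ i ∈ Finset.range k, (k:ℝ)⁻¹ * (mA * ‖v (g i)‖^2 + φ (w0 + v (g i)))
        = mA * ((k:ℝ)⁻¹ * ∑ i ∈ Finset.range k, ‖v (g i)‖^2)
          + ∑ i ∈ Finset.range k, (k:ℝ)⁻¹ * φ (w0 + v (g i)) := by
      rw [Finset.mul_sum, Finset.mul_sum, ← Finset.sum_add_distrib]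
      congr 1
      ext i
      ring
    have e2 : ∑ i ∈ Finset.range k, (k:ℝ)⁻¹ * (φ w0 + c (g i))
        = φ w0 + (k:ℝ)⁻¹ * ∑ i ∈ Finset.range k, c (g i) := by
      simp only [mul_add, Finset.sum_add_distrib]
      rw [← Finset.sum_mul, hwsum, one_mul, Finset.mul_sum]
    rw [e1, e2] at hsum2
    linarith
  -- Step 5: frequently small
  have hfreq : ∀ ε : ℝ, 0 < ε → ∃ᶠ k in atTop, ‖v (g k)‖ < ε := by
    intro ε hε
    by_contra hcon
    rw [Filter.not_frequently] at hcon
    simp only [not_lt] at hcon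
    obtain ⟨N, hN⟩ := eventually_atTop.1 hcon
    have hε' : 0 < mA * ε^2/4 := by positivity
    have hmc : Tendsto (fun k : ℕ => (k:ℝ)⁻¹ * ∑ i ∈ Finset.range k, c (g i)) atTop (𝓝 0) :=
      (hc.comp hgmono.tendsto_atTop).cesaro
    have h5 : ∀ᶠ k : ℕ in atTop, (k:ℝ)⁻¹ * ∑ i ∈ Finset.range k, c (g i) < mA * ε^2/4 :=
      hmc.eventually_lt_const hε'
    have h6 : ∀ᶠ k : ℕ in atTop, φ w0 - mA * ε^2/4 < φ (w0 + σ k) := by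
      have h7 : Tendsto (fun k => w0 + σ k) atTop (𝓝 w0) := by
        have := (tendsto_const_nhds (α := ℕ) (f := atTop) (x := w0)).add hσ
        simpa using this
      exact h7.eventually (hφlsc w0 (φ w0 - mA * ε^2/4) (by linarith))
    have h8 : ∀ᶠ k : ℕ in atTop, 2*N ≤ k ∧ 1 ≤ k :=
      (eventually_ge_atTop (2*N)).and (eventually_ge_atTop 1)
    obtain ⟨k, ⟨hk2N, hk1⟩, h5k, h6k⟩ := (h8.and (h5.and h6)).exists
    have hkpos : (0:ℝ) < k := by exact_mod_cast hk1
    have hNk : N ≤ k := by omega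
    have h9 : ((k:ℝ) - N) * ε^2 ≤ ∑ i ∈ Finset.range k, ‖v (g i)‖^2 := by
      calc ((k:ℝ) - N)*ε^2 = ∑ _i ∈ Finset.Ico N k, ε^2 := by
            rw [Finset.sum_const, Nat.card_Ico, nsmul_eq_mul]
            rw [Nat.cast_sub hNk]
        _ ≤ ∑ i ∈ Finset.Ico N k, ‖v (g i)‖^2 := by
            apply Finset.sum_le_sum
            intro i hi
            have := hN i (Finset.mem_Ico.1 hi).1
            exact pow_le_pow_left₀ hε.le this 2
        _ ≤ ∑ i ∈ Finset.range k, ‖v (g i)‖^2 := by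
            apply Finset.sum_le_sum_of_subset_of_nonneg
            · intro i hi
              rw [Finset.mem_range]
              exact (Finset.mem_Ico.1 hi).2
            · exact fun i _ _ => sq_nonneg _
    have h10 := hmean k (by omega)
    have hmpos : 0 < (k:ℝ)⁻¹ := by positivity
    have hm : (k:ℝ)⁻¹ * k = 1 := inv_mul_cancel₀ hkpos.ne'
    have hmN : (k:ℝ)⁻¹ * N ≤ 1/2 := by
      have hN2 : (N:ℝ) ≤ (k:ℝ)/2 := by
        have : ((2*N : ℕ):ℝ) ≤ (k:ℝ) := by exact_mod_cast hk2N
        push_cast at this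
        linarith
      calc (k:ℝ)⁻¹*N ≤ (k:ℝ)⁻¹*((k:ℝ)/2) := mul_le_mul_of_nonneg_left hN2 hmpos.le
        _ = 1/2 := by field_simp
    have hSsq : (k:ℝ)⁻¹ * (((k:ℝ) - N)*ε^2)
        ≤ (k:ℝ)⁻¹ * ∑ i ∈ Finset.range k, ‖v (g i)‖^2 :=
      mul_le_mul_of_nonneg_left h9 hmpos.le
    have hexp : (k:ℝ)⁻¹ * (((k:ℝ) - N)*ε^2) = (1 - (k:ℝ)⁻¹*N)*ε^2 := by
      field_simp
    rw [hexp] at hSsq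
    have hlow : ε^2/2 ≤ (1 - (k:ℝ)⁻¹*N)*ε^2 := by nlinarith [sq_nonneg ε]
    nlinarith [mul_le_mul_of_nonneg_left (le_trans hlow hSsq) hmA.le]
  -- Step 6: extraction
  have hP : ∀ n : ℕ, ∃ᶠ k in atTop, ‖v (g k)‖ < 1/((n:ℝ)+1) := fun n => hfreq _ (by positivity)
  obtain ⟨ms, hms, hmsP⟩ := Filter.extraction_forall_of_frequently hP
  refine ⟨g ∘ ms, hgmono.comp hms, ?_⟩
  apply squeeze_zero (fun n => norm_nonneg _) (fun n => (hmsP n).le)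
  exact tendsto_one_div_add_atTop_nhds_zero_nat

theorem stmt4 {X : Type*} [NormedAddCommGroup X] [InnerProductSpace ℝ X]
    (A : X → X) (mA : ℝ) (hmA : 0 < mA)
    (hsm : ∀ u v : X, mA * ‖u - v‖ ^ 2 ≤ ⟪A u - A v, u - v⟫)
    (φ : X → ℝ) (hφ : ConvexOn ℝ Set.univ φ) (hφlsc : LowerSemicontinuous φ)
    (f : X) (w0 : X) (u : ℕ → X)
    (hweak : ∀ w : X, Tendsto (fun n => ⟪u n, w⟫) atTop (𝓝 ⟪w0, w⟫))
    (hvi : ∀ n, ⟪f, w0 - u n⟫ ≤ ⟪A (u n), w0 - u n⟫ + φ w0 - φ (u n)) :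
    Tendsto u atTop (𝓝 w0) := by
  set v : ℕ → X := fun n => u n - w0 with hvdef
  set c : ℕ → ℝ := fun n => ⟪A w0 - f, w0 - u n⟫ with hcdef
  have hv : ∀ w : X, Tendsto (fun n => ⟪v n, w⟫) atTop (𝓝 0) := by
    intro w
    have h1 : Tendsto (fun n => ⟪u n, w⟫ - ⟪w0, w⟫) atTop (𝓝 (⟪w0, w⟫ - ⟪w0, w⟫)) :=
      (hweak w).sub tendsto_const_nhds
    rw [sub_self] at h1
    have e : (fun n => ⟪v n, w⟫) = fun n => ⟪u n, w⟫ - ⟪w0, w⟫ := by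
      funext n
      simp only [hvdef]
      rw [inner_sub_left]
    rw [e]
    exact h1
  have hc : Tendsto c atTop (𝓝 0) := by
    have h1 : Tendsto (fun n => ⟪w0, A w0 - f⟫ - ⟪u n, A w0 - f⟫) atTop
        (𝓝 (⟪w0, A w0 - f⟫ - ⟪w0, A w0 - f⟫)) :=
      tendsto_const_nhds.sub (hweak (A w0 - f))
    rw [sub_self] at h1
    have e : c = fun n => ⟪w0, A w0 - f⟫ - ⟪u n, A w0 - f⟫ := by
      funext n
      simp only [hcdef]
      rw [real_inner_comm, inner_sub_left]
    rw [e]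
    exact h1
  have hkey : ∀ n, mA * ‖v n‖ ^ 2 + φ (w0 + v n) ≤ φ w0 + c n := by
    intro n
    have h1 := hsm (u n) w0
    have h2 := hvi n
    have e0 : w0 + v n = u n := by
      show w0 + (u n - w0) = u n
      abel
    have e1 : ⟪A (u n) - A w0, u n - w0⟫
        = -⟪A (u n), w0 - u n⟫ + ⟪A w0, w0 - u n⟫ := by
      rw [inner_sub_left]
      rw [show (u n - w0 : X) = -(w0 - u n) by abel]
      rw [inner_neg_right, inner_neg_right]
      ring
    have e2 : c n = ⟪A w0, w0 - u n⟫ - ⟪f, w0 - u n⟫ := by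
      simp only [hcdef]
      rw [inner_sub_left]
    rw [e1] at h1
    rw [e0, hvdef]
    linarith
  -- boundedness
  obtain ⟨C, hC⟩ : ∃ C, ∀ n, c n ≤ C := by
    obtain ⟨C, hC⟩ := hc.bddAbove_range
    exact ⟨C, fun n => hC ⟨n, rfl⟩⟩
  obtain ⟨δ, hδ, hball⟩ : ∃ δ > 0, ∀ y : X, dist y w0 < δ → φ w0 - 1 < φ y := by
    have := hφlsc w0 (φ w0 - 1) (by linarith)
    rw [Metric.eventually_nhds_iff] at this
    obtain ⟨δ, hδ, h⟩ := this
    exact ⟨δ, hδ, fun y hy => h hy⟩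
  set K : ℝ := max C 0 + 1 with hKdef
  have hK0 : 0 ≤ K := by positivity
  have hKC : ∀ n, c n + 1 ≤ K := fun n => by
    have := hC n
    have : c n ≤ max C 0 := le_trans this (le_max_left _ _)
    linarith
  set L : ℝ := 2/δ with hLdef
  have hL0 : 0 ≤ L := by positivity
  have hquad : ∀ n, mA * ‖v n‖^2 ≤ K + L * ‖v n‖ := by
    intro n
    rcases le_or_gt (‖v n‖) (δ/2) with hd | hd
    · have hdist : dist (w0 + v n) w0 < δ := by
        rw [dist_eq_norm]
        simp only [add_sub_cancel_left]
        linarith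
      have hφv := hball _ hdist
      have := hkey n
      have hL : 0 ≤ L * ‖v n‖ := mul_nonneg hL0 (norm_nonneg _)
      have := hKC n
      linarith
    · set t : ℝ := δ/(2*‖v n‖) with htdef
      have hvpos : 0 < ‖v n‖ := lt_trans (by positivity) hd
      have ht0 : 0 < t := by positivity
      have ht1 : t < 1 := by
        rw [htdef, div_lt_one (by positivity)]
        linarith
      have htv : t * ‖v n‖ = δ/2 := by
        rw [htdef]
        field_simp
      have hyd : dist (w0 + t • v n) w0 < δ := by
        rw [dist_eq_norm]
        simp only [add_sub_cancel_left]
        rw [norm_smul, Real.norm_eq_abs, abs_of_pos ht0, htv]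
        linarith
      have hφy := hball _ hyd
      have hcvx := hφ.2 (Set.mem_univ w0) (Set.mem_univ (w0 + v n))
        (by linarith : (0:ℝ) ≤ 1 - t) ht0.le (by ring)
      have hptx : (1-t) • w0 + t • (w0 + v n) = w0 + t • v n := by
        rw [smul_add, ← add_assoc, ← add_smul, sub_add_cancel, one_smul]
      rw [hptx] at hcvx
      simp only [smul_eq_mul] at hcvx
      have ht2 : t * (2*‖v n‖/δ) = 1 := by
        rw [htdef]
        field_simp
      have h2 : t * (φ w0 - 2*‖v n‖/δ) ≤ t * φ (w0 + v n) := by nlinarith [hφy, hcvx]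
      have h3 : φ w0 - 2*‖v n‖/δ ≤ φ (w0 + v n) := le_of_mul_le_mul_left h2 ht0
      have h4 : L * ‖v n‖ = 2*‖v n‖/δ := by rw [hLdef]; ring
      have h5 := hkey n
      have h6 := hKC n
      linarith
  set Mb : ℝ := (K + L + mA)/mA with hMdef
  have hbM : ∀ n, ‖v n‖ ≤ Mb := by
    intro n
    by_contra hcon
    push_neg at hcon
    have h1 := hquad n
    have h2 : K + L + mA < ‖v n‖ * mA := (div_lt_iff₀ hmA).1 hcon
    have hM1 : 1 ≤ Mb := by
      rw [hMdef, le_div_iff₀ hmA]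
      linarith
    have hd1 : 1 < ‖v n‖ := lt_of_le_of_lt hM1 hcon
    nlinarith [norm_nonneg (v n)]
  apply tendsto_of_subseq_tendsto
  intro ns hns
  obtain ⟨ms, hms, hlim⟩ := stmt4_aux mA hmA φ hφ hφlsc w0 Mb (v ∘ ns) (c ∘ ns)
    (fun n => hbM (ns n)) (fun w => (hv w).comp hns) (fun n => hkey (ns n)) (hc.comp hns)
  refine ⟨ms, ?_⟩
  have h1 : Tendsto (fun n => u (ns (ms n)) - w0) atTop (𝓝 0) := by
    rw [tendsto_zero_iff_norm_tendsto_zero]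
    exact hlim
  have h2 := h1.add (tendsto_const_nhds (x := w0))
  simpa using h2
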